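/- Let V be a finite set, let φ, φ̃ : V → ℝ take values in a compact interval [a,b] with 0 < a ≤ b < φ*, and let ν := ⊗_{v∈V} P_{φ(v)} and ν̃ := ⊗_{v∈V} P_{φ̃(v)} be the corresponding product measures on ℕ^V. Let μ be a probability measure on ℕ^V with μ ≪ ν, H(μ|ν) < ∞ and ∫ ω_v dμ < ∞ for every v ∈ V. Then H(μ|ν̃) = H(μ|ν) + Σ_{v∈V} [ (∫ ω_v dμ) · log(φ(v)/φ̃(v)) + log( Z(φ̃(v)) / Z(φ(v)) ) ]. -/

import Mathlib

open scoped ENNReal BigOperators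

/-- `g(k)! = ∏_{i=1}^k g(i)`, with `g(0)! = 1`. -/
noncomputable def gfact (g : ℕ → ℝ) (k : ℕ) : ℝ := ∏ i ∈ Finset.Icc 1 k, g i

/-- The partition function `Z(s) = Σ_{k≥0} s^k / g(k)!`. -/
noncomputable def Zfun (g : ℕ → ℝ) (s : ℝ) : ℝ := ∑' k : ℕ, s ^ k / gfact g k

/-- `φstar` is the radius of convergence of the power series `Z`. -/
def IsConvRadius (g : ℕ → ℝ) (φstar : ℝ≥0∞) : Prop :=
  (∀ s : ℝ, 0 ≤ s → ENNReal.ofReal s < φstar →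
      Summable (fun k : ℕ => s ^ k / gfact g k)) ∧
  (∀ s : ℝ, 0 ≤ s → Summable (fun k : ℕ => s ^ k / gfact g k) →
      ENNReal.ofReal s ≤ φstar)

/-- The one-site zero range weight `P_φ({k}) = φ^k / (Z(φ) g(k)!)`. -/
noncomputable def Pzr (g : ℕ → ℝ) (φ : ℝ) (k : ℕ) : ℝ := φ ^ k / (Zfun g φ * gfact g k)

open MeasureTheory

/-- The one-site zero range measure `P_φ` on `ℕ`. -/
noncomputable def Pmeas (g : ℕ → ℝ) (φ : ℝ) : Measure ℕ :=
  Measure.count.withDensity (fun k => ENNReal.ofReal (Pzr g φ k))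

lemma gfact_pos {g : ℕ → ℝ} (hgpos : ∀ k : ℕ, 1 ≤ k → 0 < g k) (k : ℕ) : 0 < gfact g k :=
  Finset.prod_pos fun i hi => hgpos i (Finset.mem_Icc.mp hi).1

lemma Zfun_pos {g : ℕ → ℝ} (hgpos : ∀ k : ℕ, 1 ≤ k → 0 < g k) {s : ℝ} (hs : 0 ≤ s)
    (hsum : Summable fun k : ℕ => s ^ k / gfact g k) : 0 < Zfun g s := by
  have h1 : s ^ 0 / gfact g 0 ≤ Zfun g s :=
    Summable.le_tsum hsum 0 fun j _ => div_nonneg (pow_nonneg hs j) (gfact_pos hgpos j).le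
  have : gfact g 0 = 1 := by simp [gfact]
  simp [this] at h1
  linarith

lemma Pzr_pos {g : ℕ → ℝ} (hgpos : ∀ k : ℕ, 1 ≤ k → 0 < g k) {s : ℝ} (hs : 0 < s)
    (hsum : Summable fun k : ℕ => s ^ k / gfact g k) (k : ℕ) : 0 < Pzr g s k :=
  div_pos (pow_pos hs k) (mul_pos (Zfun_pos hgpos hs.le hsum) (gfact_pos hgpos k))

lemma Pmeas_singleton (g : ℕ → ℝ) (φ : ℝ) (k : ℕ) :
    Pmeas g φ {k} = ENNReal.ofReal (Pzr g φ k) := by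
  rw [Pmeas, withDensity_apply _ (measurableSet_singleton k), lintegral_singleton,
    Measure.count_singleton, mul_one]

lemma Pmeas_prob {g : ℕ → ℝ} (hgpos : ∀ k : ℕ, 1 ≤ k → 0 < g k) {s : ℝ} (hs : 0 < s)
    (hsum : Summable fun k : ℕ => s ^ k / gfact g k) :
    IsProbabilityMeasure (Pmeas g s) := by
  constructor
  have hZ := Zfun_pos hgpos hs.le hsum
  have hsum' : Summable (Pzr g s) := by
    rw [show Pzr g s = fun k => s ^ k / (Zfun g s * gfact g k) from rfl]
    simpa [Pzr, div_div, mul_comm] using hsum.div_const (Zfun g s)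
  rw [Pmeas, withDensity_apply _ MeasurableSet.univ, Measure.restrict_univ, lintegral_count,
    ← ENNReal.ofReal_tsum_of_nonneg (fun k => (Pzr_pos hgpos hs hsum k).le) hsum']
  have : ∑' k, Pzr g s k = 1 := by
    have h2 : ∀ k, Pzr g s k = (s ^ k / gfact g k) / Zfun g s := by
      intro k; rw [Pzr, div_mul_eq_div_div_swap]
    simp_rw [h2]
    rw [tsum_div_const]
    exact div_self hZ.ne'
  rw [this, ENNReal.ofReal_one]


/-- Change of reference product measure in the relative entropy: with
`ν = ⊗_v P_{φ(v)}` and `ν̃ = ⊗_v P_{φ̃(v)}`,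
`H(μ|ν̃) = H(μ|ν) + Σ_v [ (∫ ω_v dμ) log(φ(v)/φ̃(v)) + log(Z(φ̃(v))/Z(φ(v))) ]`. -/
theorem stmt14 {V : Type*} [Fintype V]
    (g : ℕ → ℝ) (hmono : Monotone g) (hg0 : g 0 = 0)
    (hgpos : ∀ k : ℕ, 1 ≤ k → 0 < g k)
    (φstar : ℝ≥0∞) (hφstar : 0 < φstar) (hrad : IsConvRadius g φstar)
    (a b : ℝ) (ha : 0 < a) (hab : a ≤ b) (hb : ENNReal.ofReal b < φstar)
    (φ φt : V → ℝ) (hφ : ∀ v, φ v ∈ Set.Icc a b) (hφt : ∀ v, φt v ∈ Set.Icc a b)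
    (μ : Measure (V → ℕ)) [IsProbabilityMeasure μ]
    (hac : μ ≪ Measure.pi (fun v => Pmeas g (φ v)))
    (hH : Integrable
      (fun ω => Real.log ((μ.rnDeriv (Measure.pi fun v => Pmeas g (φ v))) ω).toReal) μ)
    (hmean : ∀ v : V, Integrable (fun ω : V → ℕ => (ω v : ℝ)) μ) :
    μ ≪ Measure.pi (fun v => Pmeas g (φt v)) ∧
    Integrable
      (fun ω => Real.log ((μ.rnDeriv (Measure.pi fun v => Pmeas g (φt v))) ω).toReal) μ ∧
    (∫ ω, Real.log ((μ.rnDeriv (Measure.pi fun v => Pmeas g (φt v))) ω).toReal ∂μ) =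
      (∫ ω, Real.log ((μ.rnDeriv (Measure.pi fun v => Pmeas g (φ v))) ω).toReal ∂μ) +
      ∑ v : V, ((∫ ω, (ω v : ℝ) ∂μ) * Real.log (φ v / φt v) +
        Real.log (Zfun g (φt v) / Zfun g (φ v))) := by
  classical
  -- summability and positivity facts
  have hsum : ∀ {s : ℝ}, s ∈ Set.Icc a b → Summable (fun k : ℕ => s ^ k / gfact g k) :=
    fun hs => hrad.1 _ (ha.le.trans hs.1)
      (lt_of_le_of_lt (ENNReal.ofReal_le_ofReal hs.2) hb)
  have hspos : ∀ {s : ℝ}, s ∈ Set.Icc a b → 0 < s := fun hs => ha.trans_le hs.1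
  have hZpos : ∀ {s : ℝ}, s ∈ Set.Icc a b → 0 < Zfun g s :=
    fun hs => Zfun_pos hgpos (hspos hs).le (hsum hs)
  have hPpos : ∀ {s : ℝ} (_ : s ∈ Set.Icc a b) (k : ℕ), 0 < Pzr g s k :=
    fun hs k => Pzr_pos hgpos (hspos hs) (hsum hs) k
  haveI : ∀ v, IsProbabilityMeasure (Pmeas g (φ v)) :=
    fun v => Pmeas_prob hgpos (hspos (hφ v)) (hsum (hφ v))
  haveI : ∀ v, IsProbabilityMeasure (Pmeas g (φt v)) :=
    fun v => Pmeas_prob hgpos (hspos (hφt v)) (hsum (hφt v))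
  set ν := Measure.pi (fun v => Pmeas g (φ v)) with hν
  set νt := Measure.pi (fun v => Pmeas g (φt v)) with hνt
  haveI : IsProbabilityMeasure ν := MeasureTheory.Measure.pi.instIsProbabilityMeasure _
  haveI : IsProbabilityMeasure νt := MeasureTheory.Measure.pi.instIsProbabilityMeasure _
  -- the density
  set ρ : (V → ℕ) → ℝ := fun ω => ∏ v : V, (Pzr g (φt v) (ω v) / Pzr g (φ v) (ω v)) with hρ
  have hρpos : ∀ ω, 0 < ρ ω :=
    fun ω => Finset.prod_pos fun v _ => div_pos (hPpos (hφt v) _) (hPpos (hφ v) _)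
  set h : (V → ℕ) → ℝ≥0∞ := fun ω => ENNReal.ofReal (ρ ω) with hh
  have hmeas : Measurable h := measurable_of_countable h
  have hne0 : ∀ ω, h ω ≠ 0 := fun ω => (ENNReal.ofReal_pos.mpr (hρpos ω)).ne'
  have hnetop : ∀ ω, h ω ≠ ∞ := fun ω => ENNReal.ofReal_ne_top
  -- νt = ν.withDensity h
  have hnu : νt = ν.withDensity h := by
    refine MeasureTheory.Measure.ext_of_singleton fun ω => ?_
    rw [withDensity_apply _ (measurableSet_singleton ω), lintegral_singleton]
    rw [← Set.univ_pi_singleton ω, hν, hνt, Measure.pi_pi, Measure.pi_pi]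
    simp only [Pmeas_singleton]
    simp only [hh, hρ]
    rw [ENNReal.ofReal_prod_of_nonneg
      (fun v _ => (div_pos (hPpos (hφt v) _) (hPpos (hφ v) _)).le),
      mul_comm, ← Finset.prod_mul_distrib]
    refine Finset.prod_congr rfl fun v _ => ?_
    rw [← ENNReal.ofReal_mul (hPpos (hφ v) _).le, mul_comm,
      div_mul_cancel₀ _ (hPpos (hφ v) _).ne']
  -- absolute continuity
  have hννt : ν ≪ νt := by
    rw [hnu]
    conv_lhs => rw [← withDensity_inv_same (μ := ν) hmeas
      (Filter.Eventually.of_forall hne0) (Filter.Eventually.of_forall hnetop)]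
    exact withDensity_absolutelyContinuous _ _
  have hmuνt : μ ≪ νt := hac.trans hννt
  -- rnDeriv identity
  have hDD : μ.rnDeriv νt =ᵐ[μ] fun ω => (h ω)⁻¹ * μ.rnDeriv ν ω := by
    have := Measure.rnDeriv_withDensity_right μ ν hmeas.aemeasurable
      (Filter.Eventually.of_forall hne0) (Filter.Eventually.of_forall hnetop)
    rw [← hnu] at this
    exact this.filter_mono hac.ae_le
  have hpos : ∀ᵐ ω ∂μ, 0 < μ.rnDeriv ν ω := Measure.rnDeriv_pos hac
  have hlt : ∀ᵐ ω ∂μ, μ.rnDeriv ν ω < ∞ := hac.ae_le (Measure.rnDeriv_lt_top μ ν)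
  -- the correction term
  set L : (V → ℕ) → ℝ := fun ω => ∑ v : V, ((ω v : ℝ) * Real.log (φ v / φt v) +
    Real.log (Zfun g (φt v) / Zfun g (φ v))) with hL
  have hkey : ∀ (v : V) (k : ℕ), -Real.log (Pzr g (φt v) k / Pzr g (φ v) k) =
      (k : ℝ) * Real.log (φ v / φt v) + Real.log (Zfun g (φt v) / Zfun g (φ v)) := by
    intro v k
    have h1 : Pzr g (φt v) k / Pzr g (φ v) k =
        ((φt v / φ v) ^ k) * (Zfun g (φ v) / Zfun g (φt v)) := by
      rw [Pzr, Pzr, div_pow]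
      have := (gfact_pos hgpos k).ne'
      have := (hZpos (hφ v)).ne'
      have := (hZpos (hφt v)).ne'
      have := (hspos (hφ v)).ne'
      have h2 : (φ v) ^ k ≠ 0 := pow_ne_zero _ (hspos (hφ v)).ne'
      field_simp
    rw [h1, Real.log_mul (pow_ne_zero _ (div_pos (hspos (hφt v)) (hspos (hφ v))).ne')
      (div_pos (hZpos (hφ v)) (hZpos (hφt v))).ne', Real.log_pow, Real.log_div
      (hspos (hφt v)).ne' (hspos (hφ v)).ne', Real.log_div (hZpos (hφ v)).ne'
      (hZpos (hφt v)).ne', Real.log_div (hspos (hφ v)).ne' (hspos (hφt v)).ne',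
      Real.log_div (hZpos (hφt v)).ne' (hZpos (hφ v)).ne']
    ring
  -- a.e. identity for the logs
  have hEq : (fun ω => Real.log ((μ.rnDeriv νt) ω).toReal) =ᵐ[μ]
      fun ω => Real.log ((μ.rnDeriv ν) ω).toReal + L ω := by
    filter_upwards [hDD, hpos, hlt] with ω h1 h2 h3
    rw [h1]
    have hDne : ((μ.rnDeriv ν) ω).toReal ≠ 0 :=
      (ENNReal.toReal_pos h2.ne' h3.ne).ne'
    rw [ENNReal.toReal_mul, ENNReal.toReal_inv, hh, ENNReal.toReal_ofReal (hρpos ω).le,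
      Real.log_mul (inv_ne_zero (hρpos ω).ne') hDne, Real.log_inv]
    have hlogρ : Real.log (ρ ω) = ∑ v : V, Real.log (Pzr g (φt v) (ω v) / Pzr g (φ v) (ω v)) :=
      Real.log_prod fun v _ => (div_pos (hPpos (hφt v) _) (hPpos (hφ v) _)).ne'
    rw [hlogρ, ← Finset.sum_neg_distrib]
    have : ∑ v : V, -Real.log (Pzr g (φt v) (ω v) / Pzr g (φ v) (ω v)) = L ω :=
      Finset.sum_congr rfl fun v _ => hkey v (ω v)
    rw [this, add_comm]
  -- integrability of L
  have hLint : Integrable L μ := by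
    refine integrable_finset_sum _ fun v _ => Integrable.add ?_ (integrable_const _)
    exact (hmean v).mul_const _
  have hint : ∀ v : V, Integrable (fun ω : V → ℕ => (ω v : ℝ) * Real.log (φ v / φt v) +
      Real.log (Zfun g (φt v) / Zfun g (φ v))) μ :=
    fun v => ((hmean v).mul_const _).add (integrable_const _)
  have hone : ∫ ω, L ω ∂μ = ∑ v : V, ∫ ω, ((ω v : ℝ) * Real.log (φ v / φt v) +
      Real.log (Zfun g (φt v) / Zfun g (φ v))) ∂μ :=
    integral_finset_sum _ (fun v _ => hint v)
  refine ⟨hmuνt, (hH.add hLint).congr hEq.symm, ?_⟩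
  rw [integral_congr_ae hEq, integral_add hH hLint]
  congr 1
  rw [hone]
  refine Finset.sum_congr rfl fun v _ => ?_
  rw [integral_add ((hmean v).mul_const _) (integrable_const _),
    integral_mul_const, integral_const]
  simp
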